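/- Let 𝒢 be a subgroup of the multiplicative semigroup of n×n matrices over the tropical semiring, let E be the neutral element of 𝒢, and suppose that every matrix in 𝒢 has full row rank. Then for every G ∈ 𝒢 there exists a unique monomial tropical n×n matrix P_G such that G = P_G ⊗ E, and the map ψ : G ↦ P_G is an injective multiplication-preserving map from 𝒢 into the monomial tropical n×n matrices, i.e., ψ(G ⊗ H) = ψ(G) ⊗ ψ(H) for all G, H ∈ 𝒢. -/

import Mathlib

/-- The tropical (max-plus) semiring carrier: `ℝ ∪ {-∞}`, with `⊥` playing the
role of `-∞`. -/
abbrev Trop : Type := WithBot ℝ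

/-- Tropical matrix multiplication: `(A ⊗ B) i j = max_k (A i k + B k j)`. -/
def tropMulMat {n m p : ℕ} (A : Matrix (Fin n) (Fin m) Trop)
    (B : Matrix (Fin m) (Fin p) Trop) : Matrix (Fin n) (Fin p) Trop :=
  fun i j => Finset.univ.sup fun k => A i k + B k j

/-- A tropical matrix has full row rank if no row is a tropical linear
combination of the other rows. -/
def FullRowRank {n m : ℕ} (B : Matrix (Fin n) (Fin m) Trop) : Prop :=
  ¬ ∃ (i : Fin n) (lam : Fin n → Trop),
      ∀ t, B i t = (Finset.univ.erase i).sup fun k => lam k + B k t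

/-- A tropical square matrix is monomial if there is a permutation `σ` with
`P i j ≠ -∞ ↔ i = σ j`. -/
def IsMonomial {n : ℕ} (P : Matrix (Fin n) (Fin n) Trop) : Prop :=
  ∃ σ : Equiv.Perm (Fin n), ∀ i j, P i j ≠ ⊥ ↔ i = σ j

/-- A subset of the semigroup of tropical `n×n` matrices which is closed under
tropical matrix multiplication and forms a group under it. -/
def IsMatSubgroup {n : ℕ} (S : Set (Matrix (Fin n) (Fin n) Trop)) : Prop :=
  (∀ A ∈ S, ∀ B ∈ S, tropMulMat A B ∈ S) ∧
  ∃ E ∈ S, (∀ A ∈ S, tropMulMat E A = A ∧ tropMulMat A E = A) ∧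
    ∀ A ∈ S, ∃ B ∈ S, tropMulMat A B = E ∧ tropMulMat B A = E

lemma trop_sup_single {α : Type*} (s : Finset α) (f : α → Trop) (j : α)
    (hj : j ∈ s) (h : ∀ k ∈ s, k ≠ j → f k = ⊥) : s.sup f = f j := by
  refine le_antisymm (Finset.sup_le fun k hk => ?_) (Finset.le_sup hj)
  by_cases hkj : k = j
  · subst hkj; exact le_rfl
  · simp [h k hk hkj]

lemma trop_add_max (a b c : Trop) : a + (b ⊔ c) = (a + b) ⊔ (a + c) := by
  rcases le_total b c with h | h
  · rw [sup_eq_right.2 h, sup_eq_right.2 (add_le_add_right h a)]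
  · rw [sup_eq_left.2 h, sup_eq_left.2 (add_le_add_right h a)]

lemma trop_add_sup {α : Type*} (s : Finset α) (f : α → Trop) (c : Trop) :
    c + s.sup f = s.sup (fun x => c + f x) := by
  induction s using Finset.cons_induction with
  | empty => simp
  | cons a s ha ih => rw [Finset.sup_cons, Finset.sup_cons, trop_add_max, ih]

lemma trop_sup_add {α : Type*} (s : Finset α) (f : α → Trop) (c : Trop) :
    s.sup f + c = s.sup (fun x => f x + c) := by
  rw [add_comm, trop_add_sup]; simp [add_comm]
lemma tropMulMat_assoc {n m p q : ℕ} (A : Matrix (Fin n) (Fin m) Trop)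
    (B : Matrix (Fin m) (Fin p) Trop) (C : Matrix (Fin p) (Fin q) Trop) :
    tropMulMat (tropMulMat A B) C = tropMulMat A (tropMulMat B C) := by
  funext i j
  show (Finset.univ.sup fun k => (Finset.univ.sup fun l => A i l + B l k) + C k j)
      = Finset.univ.sup fun l => A i l + Finset.univ.sup fun k => B l k + C k j
  simp only [trop_sup_add, trop_add_sup]
  rw [Finset.sup_comm]
  simp [add_assoc]

lemma trop_cancel {x : Trop} (hx : x ≠ ⊥) {a b : Trop} (h : a + x = b + x) : a = b := by
  induction x using WithBot.recBotCoe with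
  | bot => exact absurd rfl hx
  | coe r =>
    induction a using WithBot.recBotCoe with
    | bot =>
      induction b using WithBot.recBotCoe with
      | bot => rfl
      | coe s => simp [← WithBot.coe_add] at h
    | coe s =>
      induction b using WithBot.recBotCoe with
      | bot => simp [← WithBot.coe_add] at h
      | coe t =>
        rw [← WithBot.coe_add, ← WithBot.coe_add, WithBot.coe_inj] at h
        have : s = t := by linarith
        rw [this]

lemma trop_shift {α β : ℝ} {x y : Trop} (h : (α : Trop) + x = (β : Trop) + y) :
    x = ((β - α : ℝ) : Trop) + y := by
  induction y using WithBot.recBotCoe with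
  | bot =>
    rw [WithBot.add_bot] at h ⊢
    rcases WithBot.add_eq_bot.1 h with h' | h'
    · exact absurd h' (WithBot.coe_ne_bot)
    · exact h'
  | coe r =>
    induction x using WithBot.recBotCoe with
    | bot => simp [← WithBot.coe_add] at h
    | coe s =>
      rw [← WithBot.coe_add, ← WithBot.coe_add, WithBot.coe_inj] at h
      rw [← WithBot.coe_add, WithBot.coe_inj]
      linarith
lemma fullRowRank_row_ne_bot {n m : ℕ} {B : Matrix (Fin n) (Fin m) Trop}
    (h : FullRowRank B) (i : Fin n) : ∃ t, B i t ≠ ⊥ := by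
  by_contra hc
  push_neg at hc
  refine h ⟨i, fun _ => ⊥, fun t => ?_⟩
  rw [hc t]
  refine Eq.symm (le_antisymm (Finset.sup_le fun k _ => ?_) bot_le)
  simp

/-- If a row equals a shifted other row, full row rank fails. -/
lemma not_fullRowRank_of_shift {n m : ℕ} {B : Matrix (Fin n) (Fin m) Trop}
    {i j : Fin n} (hij : i ≠ j) (c : ℝ)
    (h : ∀ t, B i t = ((c : ℝ) : Trop) + B j t) : ¬ FullRowRank B := fun hf =>
  hf ⟨i, fun l => if l = j then ((c : ℝ) : Trop) else ⊥, fun t => by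
    rw [h t]
    rw [trop_sup_single (Finset.univ.erase i) _ j
      (Finset.mem_erase.2 ⟨(Ne.symm hij), Finset.mem_univ j⟩)
      (fun k _ hk => by simp [hk])]
    simp⟩

lemma diag_zero {n : ℕ} {E : Matrix (Fin n) (Fin n) Trop}
    (hfull : FullRowRank E) (hidem : tropMulMat E E = E) (i : Fin n) : E i i = 0 := by
  have h1 : ∃ t, E i t ≠ (Finset.univ.erase i).sup fun k => E i k + E k t := by
    by_contra hc
    push_neg at hc
    exact hfull ⟨i, E i, hc⟩
  obtain ⟨t, ht⟩ := h1
  have h2 : E i t = (E i i + E i t) ⊔ ((Finset.univ.erase i).sup fun k => E i k + E k t) := by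
    conv_lhs => rw [← hidem]
    show (Finset.univ.sup fun k => E i k + E k t) = _
    conv_lhs => rw [← Finset.insert_erase (Finset.mem_univ i)]
    rw [Finset.sup_insert]
  rcases le_total (E i i + E i t) ((Finset.univ.erase i).sup fun k => E i k + E k t) with hle | hle
  · rw [sup_eq_right.2 hle] at h2; exact absurd h2 ht
  · rw [sup_eq_left.2 hle] at h2
    have hsup_le : ((Finset.univ.erase i).sup fun k => E i k + E k t) ≤ E i t := by
      rw [h2]; exact hle
    have hbot : E i t ≠ ⊥ := by
      intro hb
      rw [hb] at hsup_le
      exact ht (hb.trans (le_antisymm bot_le hsup_le))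
    have hEii : E i i ≠ ⊥ := by
      intro hb
      rw [hb, WithBot.bot_add] at h2
      exact hbot h2
    obtain ⟨r, hr⟩ := WithBot.ne_bot_iff_exists.1 hbot
    obtain ⟨c, hc⟩ := WithBot.ne_bot_iff_exists.1 hEii
    rw [← hr, ← hc, ← WithBot.coe_add, WithBot.coe_inj] at h2
    have : c = 0 := by linarith
    rw [← hc, this]
    rfl
lemma monomial_row {n : ℕ} {P : Matrix (Fin n) (Fin n) Trop} {σ : Equiv.Perm (Fin n)}
    (hσ : ∀ i j, P i j ≠ ⊥ ↔ i = σ j) (E : Matrix (Fin n) (Fin n) Trop) (i : Fin n) (t : Fin n) :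
    tropMulMat P E i t = P i (σ.symm i) + E (σ.symm i) t := by
  show (Finset.univ.sup fun k => P i k + E k t) = _
  rw [trop_sup_single Finset.univ _ (σ.symm i) (Finset.mem_univ _) (fun k _ hk => ?_)]
  have : ¬ (i = σ k) := fun he => hk (by rw [he, Equiv.symm_apply_apply])
  have hb : P i k = ⊥ := by
    by_contra hb'
    exact this ((hσ i k).1 hb')
  rw [hb, WithBot.bot_add]

lemma monomial_unique {n : ℕ} {E : Matrix (Fin n) (Fin n) Trop} (hfullE : FullRowRank E)
    {P Q : Matrix (Fin n) (Fin n) Trop} (hP : IsMonomial P) (hQ : IsMonomial Q)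
    (h : tropMulMat P E = tropMulMat Q E) : P = Q := by
  obtain ⟨σ, hσ⟩ := hP
  obtain ⟨τ, hτ⟩ := hQ
  have hrow : ∀ i t, P i (σ.symm i) + E (σ.symm i) t = Q i (τ.symm i) + E (τ.symm i) t := by
    intro i t
    rw [← monomial_row hσ E i t, ← monomial_row hτ E i t, h]
  have hPne : ∀ i, P i (σ.symm i) ≠ ⊥ := fun i => (hσ i _).2 (Equiv.apply_symm_apply σ i).symm
  have hQne : ∀ i, Q i (τ.symm i) ≠ ⊥ := fun i => (hτ i _).2 (Equiv.apply_symm_apply τ i).symm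
  have hsymm_eq : ∀ i, σ.symm i = τ.symm i := by
    intro i
    by_contra hne
    obtain ⟨a, ha⟩ := WithBot.ne_bot_iff_exists.1 (hPne i)
    obtain ⟨b, hb⟩ := WithBot.ne_bot_iff_exists.1 (hQne i)
    refine not_fullRowRank_of_shift hne (b - a) (fun t => ?_) hfullE
    refine trop_shift (x := E (σ.symm i) t) (y := E (τ.symm i) t) ?_
    rw [ha, hb]
    exact hrow i t
  have hval : ∀ i, P i (σ.symm i) = Q i (τ.symm i) := by
    intro i
    obtain ⟨t, htne⟩ := fullRowRank_row_ne_bot hfullE (σ.symm i)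
    have h0 := hrow i t
    conv_rhs at h0 => rw [← hsymm_eq i]
    conv_rhs => rw [← hsymm_eq i]
    exact trop_cancel htne h0
  funext i j
  by_cases hij : j = σ.symm i
  · have hij' : j = τ.symm i := by rw [hij, hsymm_eq]
    calc P i j = P i (σ.symm i) := by rw [hij]
      _ = Q i (τ.symm i) := hval i
      _ = Q i j := by rw [hij']
  · have h1 : P i j = ⊥ := by
      by_contra hb
      exact hij (by rw [(hσ i j).1 hb, Equiv.symm_apply_apply])
    have h2 : Q i j = ⊥ := by
      by_contra hb
      refine hij ?_
      rw [(hτ i j).1 hb, hsymm_eq, Equiv.symm_apply_apply]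
    rw [h1, h2]

lemma isMonomial_mul {n : ℕ} {P Q : Matrix (Fin n) (Fin n) Trop}
    (hP : IsMonomial P) (hQ : IsMonomial Q) : IsMonomial (tropMulMat P Q) := by
  obtain ⟨σ, hσ⟩ := hP
  obtain ⟨τ, hτ⟩ := hQ
  refine ⟨σ * τ, fun i j => ?_⟩
  have heq : tropMulMat P Q i j = P i (τ j) + Q (τ j) j := by
    show (Finset.univ.sup fun k => P i k + Q k j) = _
    rw [trop_sup_single Finset.univ _ (τ j) (Finset.mem_univ _) (fun k _ hk => ?_)]
    have hb : Q k j = ⊥ := by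
      by_contra hb'
      exact hk ((hτ k j).1 hb')
    rw [hb, WithBot.add_bot]
  rw [heq]
  have hQne : Q (τ j) j ≠ ⊥ := (hτ (τ j) j).2 rfl
  constructor
  · intro hne
    have : P i (τ j) ≠ ⊥ := fun hb => hne (by rw [hb, WithBot.bot_add])
    exact (hσ i (τ j)).1 this
  · intro hij
    have h1 : P i (τ j) ≠ ⊥ := (hσ i (τ j)).2 hij
    exact fun hb => (WithBot.add_eq_bot.1 hb).elim h1 hQne
lemma exists_monomial_rep {n : ℕ} {E G G' : Matrix (Fin n) (Fin n) Trop}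
    (hfullG : FullRowRank G) (hdiag : ∀ i, E i i = 0)
    (hGE : tropMulMat G E = G)
    (hG'G : tropMulMat G' G = E) (hGG' : tropMulMat G G' = E) :
    ∃ P, IsMonomial P ∧ G = tropMulMat P E := by
  classical
  have hkey : ∀ i : Fin n, ∃ k, G i k + G' k i = 0 := by
    intro i
    have h0 : (Finset.univ.sup fun k => G i k + G' k i) = 0 := by
      have := congrFun (congrFun hGG' i) i
      rw [hdiag i] at this
      exact this
    obtain ⟨b, _, hb⟩ := Finset.exists_mem_eq_sup (Finset.univ : Finset (Fin n))
      ⟨i, Finset.mem_univ i⟩ (fun k => G i k + G' k i)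
    exact ⟨b, by rw [← hb, h0]⟩
  choose φ hφ using hkey
  have hne : ∀ i, G i (φ i) ≠ ⊥ := by
    intro i hb
    have := hφ i
    rw [hb, WithBot.bot_add] at this
    simp at this
  have hrow : ∀ i t, G i t = G i (φ i) + E (φ i) t := by
    intro i t
    refine le_antisymm ?_ ?_
    · -- G i t ≤ G i (φ i) + E (φ i) t
      have h1 : G' (φ i) i + G i t ≤ E (φ i) t := by
        conv_rhs => rw [← hG'G]
        exact Finset.le_sup (f := fun l => G' (φ i) l + G l t) (Finset.mem_univ i)
      calc G i t = 0 + G i t := by rw [zero_add]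
        _ = (G i (φ i) + G' (φ i) i) + G i t := by rw [hφ i]
        _ = G i (φ i) + (G' (φ i) i + G i t) := by rw [add_assoc]
        _ ≤ G i (φ i) + E (φ i) t := add_le_add_right h1 _
    · conv_rhs => rw [← hGE]
      exact Finset.le_sup (f := fun k => G i k + E k t) (Finset.mem_univ (φ i))
  have hinj : Function.Injective φ := by
    intro i j hφij
    by_contra hij
    obtain ⟨a, ha⟩ := WithBot.ne_bot_iff_exists.1 (hne i)
    obtain ⟨b, hb⟩ := WithBot.ne_bot_iff_exists.1 (hne j)
    refine not_fullRowRank_of_shift hij (a - b) (fun t => ?_) hfullG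
    rw [hrow i t, hrow j t, ← ha, ← hb, hφij, ← add_assoc, ← WithBot.coe_add]
    norm_num
  let eφ : Fin n ≃ Fin n := Equiv.ofBijective φ (Finite.injective_iff_bijective.mp hinj)
  refine ⟨fun i j => if j = φ i then G i (φ i) else ⊥, ⟨eφ.symm, fun i j => ?_⟩, ?_⟩
  · have hiff : i = eφ.symm j ↔ j = φ i := by
      rw [Equiv.eq_symm_apply]
      exact ⟨fun h => h.symm, fun h => h.symm⟩
    by_cases hj : j = φ i
    · simp only [if_pos hj]
      exact ⟨fun _ => hiff.2 hj, fun _ => hne i⟩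
    · simp only [if_neg hj]
      exact ⟨fun hb => absurd rfl hb, fun hi => absurd (hiff.1 hi) hj⟩
  · funext i t
    show G i t = Finset.univ.sup fun k => (if k = φ i then G i (φ i) else ⊥) + E k t
    rw [trop_sup_single Finset.univ _ (φ i) (Finset.mem_univ _) (fun k _ hk => by
      rw [if_neg hk, WithBot.bot_add])]
    rw [if_pos rfl]
    exact hrow i t

theorem monomial_rep_of_fullRowRank {n : ℕ}
    (S : Set (Matrix (Fin n) (Fin n) Trop)) (hS : IsMatSubgroup S)
    (E : Matrix (Fin n) (Fin n) Trop) (hE : E ∈ S)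
    (hEneut : ∀ G ∈ S, tropMulMat E G = G ∧ tropMulMat G E = G)
    (hfull : ∀ G ∈ S, FullRowRank G) :
    (∀ G ∈ S, ∃! P : Matrix (Fin n) (Fin n) Trop,
        IsMonomial P ∧ G = tropMulMat P E) ∧
    ∃ ψ : Matrix (Fin n) (Fin n) Trop → Matrix (Fin n) (Fin n) Trop,
      (∀ G ∈ S, IsMonomial (ψ G) ∧ G = tropMulMat (ψ G) E) ∧
      Set.InjOn ψ S ∧
      ∀ G ∈ S, ∀ H ∈ S, ψ (tropMulMat G H) = tropMulMat (ψ G) (ψ H) := by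
  classical
  obtain ⟨hclosed, E₀, hE₀S, hE₀neut, hinv⟩ := hS
  have hE₀E : E₀ = E := by
    have h2 := (hEneut E₀ hE₀S).2
    have h3 := (hE₀neut E hE).1
    rw [h2] at h3
    exact h3
  have hEE : tropMulMat E E = E := (hEneut E hE).1
  have hdiag : ∀ i, E i i = 0 := diag_zero (hfull E hE) hEE
  have hexu : ∀ G ∈ S, ∃! P, IsMonomial P ∧ G = tropMulMat P E := by
    intro G hG
    obtain ⟨G', hG'S, hGG', hG'G⟩ := hinv G hG
    rw [hE₀E] at hGG' hG'G
    obtain ⟨P, hPmono, hPE⟩ :=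
      exists_monomial_rep (hfull G hG) hdiag (hEneut G hG).2 hG'G hGG'
    refine ⟨P, ⟨hPmono, hPE⟩, fun Q hQ => ?_⟩
    exact monomial_unique (hfull E hE) hQ.1 hPmono (by rw [← hQ.2, ← hPE])
  refine ⟨hexu, ?_⟩
  set ψ : Matrix (Fin n) (Fin n) Trop → Matrix (Fin n) (Fin n) Trop :=
    fun G => if hG : G ∈ S then (hexu G hG).exists.choose else G with hψ
  have hspec : ∀ G, ∀ hG : G ∈ S, IsMonomial (ψ G) ∧ G = tropMulMat (ψ G) E := by
    intro G hG
    simp only [hψ, dif_pos hG]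
    exact (hexu G hG).exists.choose_spec
  refine ⟨ψ, fun G hG => hspec G hG, ?_, ?_⟩
  · intro G hG H hH heq
    rw [(hspec G hG).2, (hspec H hH).2, heq]
  · intro G hG H hH
    have hGH : tropMulMat G H ∈ S := hclosed G hG H hH
    have e1 : tropMulMat G H = tropMulMat (ψ G) H := by
      conv_lhs => rw [(hspec G hG).2]
      rw [tropMulMat_assoc, (hEneut H hH).1]
    have e2 : tropMulMat (tropMulMat (ψ G) (ψ H)) E = tropMulMat (ψ G) H := by
      rw [tropMulMat_assoc, ← (hspec H hH).2]
    refine (hexu _ hGH).unique ⟨(hspec _ hGH).1, (hspec _ hGH).2⟩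
      ⟨isMonomial_mul (hspec G hG).1 (hspec H hH).1, by rw [e1, e2]⟩
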